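/- Let δ ≥ 0 and 1 < p⁻ ≤ p⁺ < ∞. There exists a constant c > 0, depending only on p⁻, p⁺ and δ, such that for every exponent p ∈ [p⁻, p⁺] with conjugate p' := p/(p−1), every shift a ≥ 0, every λ ∈ [0,1] and every r ≥ 0: ((φ_p)_a)*(λ r) ≤ c · λ^{min{2, p'}} · ((φ_p)_a)*(r). -/

import Mathlib

open MeasureTheory

/-- The shifted N-function `(φ_p)_a(r) = ∫₀^r (δ+a+s)^{p-2} s ds`. -/
noncomputable def phiShift (δ p a r : ℝ) : ℝ :=
  ∫ s in (0:ℝ)..r, (δ + a + s) ^ (p - 2) * s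

/-- The Fenchel conjugate `ψ*(r) = sup_{s ≥ 0} (r·s − ψ(s))`. -/
noncomputable def fconj (ψ : ℝ → ℝ) (r : ℝ) : ℝ :=
  ⨆ s : NNReal, (r * (s : ℝ) - ψ (s : ℝ))

namespace Stmt18Aux

variable {b p : ℝ}

lemma aux_integrable (hb : 0 ≤ b) (hp : 1 < p) {θ : ℝ} (hθ : 0 < θ) {t : ℝ} (ht : 0 ≤ t) :
    IntervalIntegrable (fun u ↦ (b + θ * u) ^ (p - 2) * u) volume 0 t := by
  have huIcc : Set.uIcc (0:ℝ) t = Set.Icc 0 t := Set.uIcc_of_le ht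
  rcases le_or_gt 2 p with h2 | h2
  · apply ContinuousOn.intervalIntegrable
    apply ContinuousOn.mul _ continuousOn_id
    apply ContinuousOn.rpow_const
    · fun_prop
    · intro x _; exact Or.inr (by linarith)
  rcases hb.lt_or_eq with hb' | hb'
  · apply ContinuousOn.intervalIntegrable
    apply ContinuousOn.mul _ continuousOn_id
    apply ContinuousOn.rpow_const
    · fun_prop
    · intro x hx
      rw [huIcc] at hx
      have : 0 < b + θ * x := by nlinarith [hx.1]
      exact Or.inl this.ne'
  · -- b = 0
    have hint : IntervalIntegrable (fun u : ℝ ↦ θ ^ (p-2) * u ^ (p-1)) volume 0 t :=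
      (intervalIntegral.intervalIntegrable_rpow' (by linarith)).const_mul _
    apply hint.congr_ae
    rw [Filter.eventuallyEq_iff_exists_mem]
    refine ⟨Set.Ioc 0 t, ?_, ?_⟩
    · rw [Set.uIoc_of_le ht]
      exact self_mem_ae_restrict measurableSet_Ioc
    · intro x hx
      have hx0 : 0 < x := hx.1
      simp only [← hb']
      rw [zero_add, Real.mul_rpow hθ.le hx0.le]
      have : x ^ (p-2) * x = x ^ (p-1) := by
        rw [← Real.rpow_add_one hx0.ne' (p-2)]; congr 1; ring
      rw [mul_assoc, this]

lemma phi_nonneg (hb : 0 ≤ b) {t : ℝ} (ht : 0 ≤ t) :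
    0 ≤ ∫ s in (0:ℝ)..t, (b + s) ^ (p - 2) * s := by
  apply intervalIntegral.integral_nonneg ht
  intro u hu
  exact mul_nonneg (Real.rpow_nonneg (by linarith [hu.1]) _) hu.1

lemma key_pointwise (hb : 0 ≤ b) (hp : 1 < p) {θ u : ℝ} (hθ : 1 ≤ θ) (hu : 0 ≤ u) :
    (b + θ * u) ^ (p - 2) ≤ θ ^ (max 2 p - 2) * (b + u) ^ (p - 2) := by
  have hθ0 : (0:ℝ) < θ := lt_of_lt_of_le one_pos hθ
  rcases le_total 2 p with h2 | h2
  · rw [max_eq_right h2, ← Real.mul_rpow hθ0.le (by linarith)]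
    apply Real.rpow_le_rpow (by positivity) (by nlinarith) (by linarith)
  · rw [max_eq_left h2]
    norm_num [Real.rpow_zero]
    rcases eq_or_lt_of_le (show (0:ℝ) ≤ b + u by linarith) with h0 | h0
    · have hb0 : b = 0 := by nlinarith
      have hu0 : u = 0 := by nlinarith
      simp [hb0, hu0]
    · exact Real.rpow_le_rpow_of_nonpos h0 (by nlinarith) (by linarith)

/-- Upper growth bound: `φ(θ t) ≤ θ^{max 2 p} φ(t)` for `θ ≥ 1`. -/
lemma phi_scale (hb : 0 ≤ b) (hp : 1 < p) {θ t : ℝ} (hθ : 1 ≤ θ) (ht : 0 ≤ t) :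
    (∫ s in (0:ℝ)..(θ * t), (b + s) ^ (p - 2) * s) ≤
      θ ^ (max 2 p) * ∫ s in (0:ℝ)..t, (b + s) ^ (p - 2) * s := by
  have hθ0 : (0:ℝ) < θ := lt_of_lt_of_le one_pos hθ
  set q : ℝ := max 2 p with hq
  have h1 : (∫ s in (0:ℝ)..(θ * t), (b + s) ^ (p - 2) * s)
      = θ * ∫ u in (0:ℝ)..t, (b + θ * u) ^ (p - 2) * (θ * u) := by
    have := intervalIntegral.smul_integral_comp_mul_left
      (fun s : ℝ ↦ (b + s) ^ (p - 2) * s) (a := 0) (b := t) θ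
    simp only [mul_zero, smul_eq_mul] at this
    rw [← this]
  have h2 : (∫ u in (0:ℝ)..t, (b + θ * u) ^ (p - 2) * (θ * u))
      = θ * ∫ u in (0:ℝ)..t, (b + θ * u) ^ (p - 2) * u := by
    rw [← intervalIntegral.integral_const_mul]
    congr 1; funext u; ring
  have h3 : (∫ u in (0:ℝ)..t, (b + θ * u) ^ (p - 2) * u)
      ≤ ∫ u in (0:ℝ)..t, θ ^ (q - 2) * ((b + u) ^ (p - 2) * u) := by
    apply intervalIntegral.integral_mono_on ht (aux_integrable hb hp hθ0 ht)
    · have := (aux_integrable hb hp one_pos ht).const_mul (θ ^ (q - 2))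
      simpa using this
    · intro x hx
      rw [← mul_assoc]
      exact mul_le_mul_of_nonneg_right (key_pointwise hb hp hθ hx.1) hx.1
  have h4 : (∫ u in (0:ℝ)..t, θ ^ (q - 2) * ((b + u) ^ (p - 2) * u))
      = θ ^ (q - 2) * ∫ u in (0:ℝ)..t, (b + u) ^ (p - 2) * u :=
    intervalIntegral.integral_const_mul _ _
  have hθq : θ * (θ * θ ^ (q - 2)) = θ ^ q := by
    have : θ ^ q = θ ^ (q - 2) * θ ^ (2:ℝ) := by
      rw [← Real.rpow_add hθ0]; ring_nf
    rw [this, show (2:ℝ) = ((2:ℕ):ℝ) by norm_num, Real.rpow_natCast]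
    ring
  calc (∫ s in (0:ℝ)..(θ * t), (b + s) ^ (p - 2) * s)
      = θ * (θ * ∫ u in (0:ℝ)..t, (b + θ * u) ^ (p - 2) * u) := by rw [h1, h2]
    _ ≤ θ * (θ * (θ ^ (q - 2) * ∫ u in (0:ℝ)..t, (b + u) ^ (p - 2) * u)) := by
        rw [← h4]
        have := mul_le_mul_of_nonneg_left h3 hθ0.le
        exact mul_le_mul_of_nonneg_left this hθ0.le
    _ = θ ^ q * ∫ u in (0:ℝ)..t, (b + u) ^ (p - 2) * u := by rw [← hθq]; ring

lemma rho_ge (hb : 0 ≤ b) (hp : 1 < p) {r : ℝ} (hr : 0 ≤ r) {u : ℝ}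
    (hu : max 1 (max b ((2*r) ^ (p-1)⁻¹)) ≤ u) :
    r ≤ (b + u) ^ (p - 2) * u := by
  have h1u : (1:ℝ) ≤ u := le_trans (le_max_left _ _) hu
  have hbu : b ≤ u := le_trans (le_trans (le_max_left _ _) (le_max_right _ _)) hu
  have hru : (2*r) ^ (p-1)⁻¹ ≤ u := le_trans (le_trans (le_max_right _ _) (le_max_right _ _)) hu
  have hu0 : (0:ℝ) < u := lt_of_lt_of_le one_pos h1u
  have hclaim : (1/2) * u ^ (p-2) ≤ (b + u) ^ (p-2) := by
    rcases le_total 2 p with h2 | h2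
    · have h1 : u ^ (p-2) ≤ (b+u) ^ (p-2) :=
        Real.rpow_le_rpow hu0.le (by linarith) (by linarith)
      nlinarith [Real.rpow_nonneg hu0.le (p-2)]
    · have h1 : (b + u) ^ (p-2) ≥ (2*u) ^ (p-2) :=
        Real.rpow_le_rpow_of_nonpos (by linarith) (by linarith) (by linarith)
      have h2' : (2*u) ^ (p-2) = (2:ℝ) ^ (p-2) * u ^ (p-2) :=
        Real.mul_rpow (by norm_num) hu0.le
      have h3 : (2:ℝ) ^ (-1:ℝ) ≤ (2:ℝ) ^ (p-2) :=
        Real.rpow_le_rpow_of_exponent_le (by norm_num) (by linarith)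
      have h4 : (2:ℝ) ^ (-1:ℝ) = 1/2 := by
        rw [Real.rpow_neg_one]; norm_num
      have h5 : (0:ℝ) ≤ u ^ (p-2) := Real.rpow_nonneg hu0.le _
      rw [h4] at h3
      nlinarith [mul_le_mul_of_nonneg_right h3 h5]
  have hup : 2*r ≤ u ^ (p-1) := by
    calc 2*r = ((2*r) ^ (p-1)⁻¹) ^ (p-1) :=
          (Real.rpow_inv_rpow (by linarith) (show (0:ℝ) < p - 1 by linarith).ne').symm
      _ ≤ u ^ (p-1) :=
          Real.rpow_le_rpow (Real.rpow_nonneg (by linarith) _) hru (by linarith)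
  have hmul : u ^ (p-2) * u = u ^ (p-1) := by
    rw [← Real.rpow_add_one hu0.ne' (p-2)]; congr 1; ring
  have : (1/2) * u ^ (p-2) * u ≤ (b + u) ^ (p-2) * u :=
    mul_le_mul_of_nonneg_right hclaim hu0.le
  calc r = (1/2) * (2*r) := by ring
    _ ≤ (1/2) * u ^ (p-1) := by linarith
    _ = (1/2) * u ^ (p-2) * u := by rw [mul_assoc, hmul]
    _ ≤ (b + u) ^ (p-2) * u := this

lemma phi_bddAbove (hb : 0 ≤ b) (hp : 1 < p) {r : ℝ} (hr : 0 ≤ r) :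
    BddAbove (Set.range fun s : NNReal ↦
      r * (s:ℝ) - ∫ u in (0:ℝ)..(s:ℝ), (b + u) ^ (p - 2) * u) := by
  set t : ℝ := max 1 (max b ((2*r) ^ (p-1)⁻¹)) with htdef
  have ht0 : (0:ℝ) < t := lt_of_lt_of_le one_pos (le_max_left _ _)
  refine ⟨r * t, ?_⟩
  rintro x ⟨s, rfl⟩
  simp only
  have hs0 : (0:ℝ) ≤ (s:ℝ) := s.2
  rcases le_total (s:ℝ) t with hst | hst
  · have := phi_nonneg (b := b) (p := p) hb hs0
    nlinarith
  · -- t ≤ s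
    have hint0s : IntervalIntegrable (fun u : ℝ ↦ (b + u) ^ (p - 2) * u) volume 0 (s:ℝ) := by
      have := aux_integrable hb hp one_pos hs0
      simpa using this
    have hint0t : IntervalIntegrable (fun u : ℝ ↦ (b + u) ^ (p - 2) * u) volume 0 t := by
      apply hint0s.mono_set
      rw [Set.uIcc_of_le ht0.le, Set.uIcc_of_le hs0]
      exact Set.Icc_subset_Icc (le_refl _) hst
    have hintts : IntervalIntegrable (fun u : ℝ ↦ (b + u) ^ (p - 2) * u) volume t (s:ℝ) := by
      apply hint0s.mono_set
      rw [Set.uIcc_of_le hst, Set.uIcc_of_le hs0]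
      exact Set.Icc_subset_Icc ht0.le (le_refl _)
    have hsplit : (∫ u in (0:ℝ)..(s:ℝ), (b + u) ^ (p - 2) * u)
        = (∫ u in (0:ℝ)..t, (b + u) ^ (p - 2) * u) + ∫ u in t..(s:ℝ), (b + u) ^ (p - 2) * u :=
      (intervalIntegral.integral_add_adjacent_intervals hint0t hintts).symm
    have h0t : 0 ≤ ∫ u in (0:ℝ)..t, (b + u) ^ (p - 2) * u := phi_nonneg (b := b) (p := p) hb ht0.le
    have hts : r * ((s:ℝ) - t) ≤ ∫ u in t..(s:ℝ), (b + u) ^ (p - 2) * u := by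
      have hconst : (∫ _ in t..(s:ℝ), r) = ((s:ℝ) - t) * r := by
        rw [intervalIntegral.integral_const, smul_eq_mul]
      calc r * ((s:ℝ) - t) = ∫ _ in t..(s:ℝ), r := by rw [hconst]; ring
        _ ≤ ∫ u in t..(s:ℝ), (b + u) ^ (p - 2) * u := by
            apply intervalIntegral.integral_mono_on hst intervalIntegrable_const hintts
            intro x hx
            exact rho_ge hb hp hr hx.1
    nlinarith [hsplit, h0t, hts]

/-- The key duality estimate. -/
lemma conj_scale (hb : 0 ≤ b) (hp : 1 < p) {r lam : ℝ} (hr : 0 ≤ r)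
    (hl0 : 0 < lam) (hl1 : lam ≤ 1) :
    fconj (fun t ↦ ∫ s in (0:ℝ)..t, (b + s) ^ (p - 2) * s) (lam * r) ≤
      lam ^ (min 2 (p / (p - 1))) *
        fconj (fun t ↦ ∫ s in (0:ℝ)..t, (b + s) ^ (p - 2) * s) r := by
  have hp1 : (0:ℝ) < p - 1 := by linarith
  set Q : ℝ := min 2 (p / (p - 1)) with hQdef
  set q : ℝ := max 2 p with hqdef
  have hq2 : (2:ℝ) ≤ q := le_max_left _ _
  have hQq : Q = q / (q - 1) := by
    rcases le_total p 2 with h2 | h2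
    · have hqe : q = 2 := max_eq_left h2
      have hQe : Q = 2 := min_eq_left ((le_div_iff₀ hp1).mpr (by linarith))
      rw [hQe, hqe]; norm_num
    · have hqe : q = p := max_eq_right h2
      have hQe : Q = p / (p - 1) := min_eq_right ((div_le_iff₀ hp1).mpr (by linarith))
      rw [hQe, hqe]
  have hq1 : (0:ℝ) < q - 1 := by linarith
  have hQ1 : 1 < Q := by
    rw [hQq]
    rw [lt_div_iff₀ hq1]; linarith
  have hid : Q + (1 - Q) * q = 0 := by
    have : Q * (q - 1) = q := by rw [hQq]; field_simp
    nlinarith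
  set θ : ℝ := lam ^ (1 - Q) with hθdef
  have hθ1 : 1 ≤ θ :=
    Real.one_le_rpow_of_pos_of_le_one_of_nonpos hl0 hl1 (by linarith)
  have hθ0 : 0 < θ := Real.rpow_pos_of_pos hl0 _
  apply ciSup_le
  intro s
  set u : NNReal := ⟨θ * (s:ℝ), mul_nonneg hθ0.le s.2⟩ with hudef
  have hucoe : (u:ℝ) = θ * (s:ℝ) := rfl
  have key1 : lam * r * (s:ℝ) = lam ^ Q * (r * (u:ℝ)) := by
    rw [hucoe]
    have h : lam ^ Q * θ = lam := by
      rw [hθdef, ← Real.rpow_add hl0, show Q + (1-Q) = 1 by ring, Real.rpow_one]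
    calc lam * r * (s:ℝ) = (lam ^ Q * θ) * (r * (s:ℝ)) := by rw [h]; ring
      _ = lam ^ Q * (r * (θ * (s:ℝ))) := by ring
  have key2 : lam ^ Q * (∫ x in (0:ℝ)..(u:ℝ), (b + x) ^ (p - 2) * x)
      ≤ ∫ x in (0:ℝ)..(s:ℝ), (b + x) ^ (p - 2) * x := by
    have hsc := phi_scale hb hp hθ1 s.2
    have h1 : lam ^ Q * (∫ x in (0:ℝ)..(θ * (s:ℝ)), (b + x) ^ (p - 2) * x)
        ≤ lam ^ Q * (θ ^ q * ∫ x in (0:ℝ)..(s:ℝ), (b + x) ^ (p - 2) * x) :=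
      mul_le_mul_of_nonneg_left hsc (Real.rpow_nonneg hl0.le _)
    have h2 : lam ^ Q * θ ^ q = 1 := by
      rw [hθdef, ← Real.rpow_mul hl0.le, ← Real.rpow_add hl0, hid, Real.rpow_zero]
    rw [hucoe]
    calc lam ^ Q * (∫ x in (0:ℝ)..(θ * (s:ℝ)), (b + x) ^ (p - 2) * x)
        ≤ lam ^ Q * θ ^ q * ∫ x in (0:ℝ)..(s:ℝ), (b + x) ^ (p - 2) * x := by
          rw [mul_assoc]; exact h1
      _ = ∫ x in (0:ℝ)..(s:ℝ), (b + x) ^ (p - 2) * x := by rw [h2, one_mul]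
  have hterm : (fun v : NNReal ↦ r * (v:ℝ) - ∫ x in (0:ℝ)..(v:ℝ), (b + x) ^ (p - 2) * x) u
      ≤ fconj (fun t ↦ ∫ x in (0:ℝ)..t, (b + x) ^ (p - 2) * x) r :=
    le_ciSup (phi_bddAbove hb hp hr) u
  simp only at hterm
  calc lam * r * (s:ℝ) - ∫ x in (0:ℝ)..(s:ℝ), (b + x) ^ (p - 2) * x
      ≤ lam ^ Q * (r * (u:ℝ)) - lam ^ Q * (∫ x in (0:ℝ)..(u:ℝ), (b + x) ^ (p - 2) * x) := by
        rw [key1]; linarith [key2]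
    _ = lam ^ Q * (r * (u:ℝ) - ∫ x in (0:ℝ)..(u:ℝ), (b + x) ^ (p - 2) * x) := by ring
    _ ≤ lam ^ Q * fconj (fun t ↦ ∫ x in (0:ℝ)..t, (b + x) ^ (p - 2) * x) r :=
        mul_le_mul_of_nonneg_left hterm (Real.rpow_nonneg hl0.le _)

end Stmt18Aux

theorem stmt18 (δ pm pp : ℝ) (hδ : 0 ≤ δ) (hpm : 1 < pm) (hpmpp : pm ≤ pp) :
    ∃ c : ℝ, 0 < c ∧ ∀ p : ℝ, pm ≤ p → p ≤ pp → ∀ a : ℝ, 0 ≤ a →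
      ∀ lam : ℝ, 0 ≤ lam → lam ≤ 1 → ∀ r : ℝ, 0 ≤ r →
        fconj (phiShift δ p a) (lam * r) ≤
          c * lam ^ (min 2 (p / (p - 1))) * fconj (phiShift δ p a) r := by
  refine ⟨1, one_pos, ?_⟩
  intro p hpl hpu a ha lam hl0 hl1 r hr
  have hp : 1 < p := lt_of_lt_of_le hpm hpl
  have hb : 0 ≤ δ + a := by linarith
  have hphi : phiShift δ p a = fun t ↦ ∫ s in (0:ℝ)..t, (δ + a + s) ^ (p - 2) * s := rfl
  rcases hl0.eq_or_lt with h0 | h0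
  · -- lam = 0
    have hlam : lam = 0 := h0.symm
    subst hlam
    have hQpos : (0:ℝ) < min 2 (p / (p - 1)) :=
      lt_min (by norm_num) (div_pos (by linarith) (by linarith))
    rw [Real.zero_rpow hQpos.ne']
    rw [mul_zero, zero_mul, zero_mul]
    apply ciSup_le
    intro s
    simp only [phiShift, zero_mul]
    have : 0 ≤ ∫ x in (0:ℝ)..(s:ℝ), (δ + a + x) ^ (p - 2) * x := by
      apply intervalIntegral.integral_nonneg s.2
      intro u hu
      exact mul_nonneg (Real.rpow_nonneg (by linarith [hu.1]) _) hu.1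
    linarith
  · rw [hphi]
    have := Stmt18Aux.conj_scale (b := δ + a) hb hp hr h0 hl1
    calc fconj (fun t ↦ ∫ s in (0:ℝ)..t, (δ + a + s) ^ (p - 2) * s) (lam * r)
        ≤ lam ^ (min 2 (p / (p - 1))) *
            fconj (fun t ↦ ∫ s in (0:ℝ)..t, (δ + a + s) ^ (p - 2) * s) r := this
      _ = 1 * lam ^ (min 2 (p / (p - 1))) *
            fconj (fun t ↦ ∫ s in (0:ℝ)..t, (δ + a + s) ^ (p - 2) * s) r := by ring
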